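/- Let 𝔰 be the (n+1)-dimensional solvable Lie algebra with orthonormal basis e₀,...,eₙ, brackets [e₀,eᵢ] = μᵢeᵢ for i ≥ 1 and [eᵢ,eⱼ] = 0 for i,j ≥ 1 (μᵢ real). Then the sectional curvature of the left-invariant metric in the direction of an orthonormal frame (X,Y), X = Σxᵢeᵢ, Y = Σyᵢeᵢ, equals K(X,Y) = −Σ_{i=1}^{n} μᵢ²(x₀yᵢ − y₀xᵢ)² − Σ_{1≤j<k≤n} μⱼμₖ(xⱼyₖ − yⱼxₖ)². -/

import Mathlib

open scoped RealInnerProductSpace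

/-- The operator `L` of the solvable extension: diagonal in the orthonormal basis
`e₀,…,eₙ` of `ℝ^{n+1}` with eigenvalues `μ₀,…,μₙ` (here `μ₀ = 0`, `e₀ = b`). -/
noncomputable def solvL (n : ℕ) (μ : Fin (n + 1) → ℝ)
    (x : EuclideanSpace ℝ (Fin (n + 1))) : EuclideanSpace ℝ (Fin (n + 1)) :=
  WithLp.toLp 2 (fun i => μ i * x i)

/-- The Levi-Civita covariant derivative of left-invariant fields on the solvable extension,
determined by `∇_b b = 0`, `∇_b u = 0`, `∇_u b = −Lu`, `∇_u v = ⟨Lu,v⟩b`. -/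
noncomputable def solvNabla (n : ℕ) (μ : Fin (n + 1) → ℝ)
    (X Y : EuclideanSpace ℝ (Fin (n + 1))) : EuclideanSpace ℝ (Fin (n + 1)) :=
  ⟪solvL n μ X, Y⟫ • (EuclideanSpace.single (0 : Fin (n + 1)) (1 : ℝ)) - Y 0 • solvL n μ X

/-- The Lie bracket of the solvable extension: `[e₀,eᵢ] = μᵢeᵢ` for `i ≥ 1`,
`[eᵢ,eⱼ] = 0` for `i,j ≥ 1`. -/
noncomputable def solvBracket (n : ℕ) (μ : Fin (n + 1) → ℝ)
    (X Y : EuclideanSpace ℝ (Fin (n + 1))) : EuclideanSpace ℝ (Fin (n + 1)) :=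
  X 0 • solvL n μ Y - Y 0 • solvL n μ X

/-- The curvature operator `R(X,Y)Z` of the Levi-Civita connection on the solvable
extension. -/
noncomputable def solvCurv (n : ℕ) (μ : Fin (n + 1) → ℝ)
    (X Y Z : EuclideanSpace ℝ (Fin (n + 1))) : EuclideanSpace ℝ (Fin (n + 1)) :=
  solvNabla n μ X (solvNabla n μ Y Z) - solvNabla n μ Y (solvNabla n μ X Z)
    - solvNabla n μ (solvBracket n μ X Y) Z

lemma innerL (n : ℕ) (μ : Fin (n+1) → ℝ) (X Y : EuclideanSpace ℝ (Fin (n+1))) :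
    ⟪solvL n μ X, Y⟫ = ∑ i, μ i * X i * Y i := by
  simp only [solvL, PiLp.inner_apply, RCLike.inner_apply, conj_trivial, mul_assoc]
  exact Finset.sum_congr rfl fun i _ => by ring

lemma inner_nabla (n : ℕ) (μ : Fin (n+1) → ℝ) (X Y Z : EuclideanSpace ℝ (Fin (n+1))) :
    ⟪solvNabla n μ X Y, Z⟫ = ⟪solvL n μ X, Y⟫ * Z 0 - Y 0 * ⟪solvL n μ X, Z⟫ := by
  simp [solvNabla, inner_sub_left, real_inner_smul_left, EuclideanSpace.inner_single_left,
    Finset.mul_sum, mul_assoc]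

lemma nabla_zero (n : ℕ) (μ : Fin (n+1) → ℝ) (hμ0 : μ 0 = 0)
    (X Y : EuclideanSpace ℝ (Fin (n+1))) :
    (solvNabla n μ X Y) 0 = ⟪solvL n μ X, Y⟫ := by
  simp [solvNabla, solvL, hμ0, PiLp.sub_apply, PiLp.smul_apply, EuclideanSpace.single_apply]

lemma L_zero (n : ℕ) (μ : Fin (n+1) → ℝ) (hμ0 : μ 0 = 0)
    (X : EuclideanSpace ℝ (Fin (n+1))) : (solvL n μ X) 0 = 0 := by
  simp [solvL, hμ0]

lemma inner_L_bracket (n : ℕ) (μ : Fin (n+1) → ℝ) (X Y Z : EuclideanSpace ℝ (Fin (n+1))) :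
    ⟪solvL n μ (solvBracket n μ Y X), Z⟫ =
      Y 0 * (∑ i, μ i ^ 2 * X i * Z i) - X 0 * (∑ i, μ i ^ 2 * Y i * Z i) := by
  rw [innerL, Finset.mul_sum, Finset.mul_sum, ← Finset.sum_sub_distrib]
  refine Finset.sum_congr rfl fun i _ => ?_
  simp only [solvBracket, solvL, PiLp.sub_apply, PiLp.smul_apply, smul_eq_mul]
  ring

lemma solv_key (n : ℕ) (μ : Fin (n+1) → ℝ) (hμ0 : μ 0 = 0)
    (X Y : EuclideanSpace ℝ (Fin (n+1))) :
    ⟪solvCurv n μ Y X X, Y⟫ =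
      (∑ i, μ i * X i * Y i)^2 - (∑ i, μ i * X i * X i) * (∑ i, μ i * Y i * Y i)
      - (Y 0)^2 * (∑ i, μ i ^ 2 * X i * X i) + 2 * X 0 * Y 0 * (∑ i, μ i ^ 2 * X i * Y i)
      - (X 0)^2 * (∑ i, μ i ^ 2 * Y i * Y i) := by
  rw [solvCurv, inner_sub_left, inner_sub_left, inner_nabla, inner_nabla, inner_nabla,
    nabla_zero n μ hμ0, nabla_zero n μ hμ0,
    real_inner_comm (solvNabla n μ X X) (solvL n μ Y), inner_nabla,
    real_inner_comm (solvNabla n μ Y X) (solvL n μ X), inner_nabla,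
    L_zero n μ hμ0, L_zero n μ hμ0, inner_L_bracket, inner_L_bracket]
  simp only [innerL]
  simp only [solvL, PiLp.toLp_apply]
  have c1 : (∑ x, μ x * X x * (μ x * Y x)) = ∑ x, μ x ^ 2 * X x * Y x :=
    Finset.sum_congr rfl fun i _ => by ring
  have c2 : (∑ x, μ x * Y x * (μ x * X x)) = ∑ x, μ x ^ 2 * X x * Y x :=
    Finset.sum_congr rfl fun i _ => by ring
  have c3 : (∑ x, μ x * Y x * X x) = ∑ x, μ x * X x * Y x :=
    Finset.sum_congr rfl fun i _ => by ring
  have c4 : (∑ x, μ x ^ 2 * Y x * X x) = ∑ x, μ x ^ 2 * X x * Y x :=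
    Finset.sum_congr rfl fun i _ => by ring
  rw [c1, c2, c3, c4]
  ring

lemma double_sum_lt {m : ℕ} (t : Fin m → Fin m → ℝ) (hsymm : ∀ j k, t j k = t k j)
    (hdiag : ∀ j, t j j = 0) :
    2 * (∑ j, ∑ k, if j < k then t j k else 0) = ∑ j, ∑ k, t j k := by
  have h1 : (∑ j, ∑ k, t j k)
      = ∑ j, ∑ k, ((if j < k then t j k else 0) + (if k < j then t j k else 0)
          + (if j = k then t j k else 0)) := by
    refine Finset.sum_congr rfl fun j _ => Finset.sum_congr rfl fun k _ => ?_
    rcases lt_trichotomy j k with h|h|h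
    · simp [h, h.ne, asymm h]
    · simp [h]
    · simp [asymm h, h, h.ne']
  have h2 : (∑ j, ∑ k, if (k:Fin m) < j then t j k else 0)
      = ∑ j, ∑ k, if j < k then t j k else 0 := by
    rw [Finset.sum_comm]
    exact Finset.sum_congr rfl fun j _ => Finset.sum_congr rfl fun k _ => by
      rw [hsymm j k]
  have h3 : (∑ j : Fin m, ∑ k, if j = k then t j k else 0) = 0 := by
    refine Finset.sum_eq_zero fun j _ => ?_
    rw [Finset.sum_ite_eq]
    simp [hdiag]
  rw [h1]
  simp only [Finset.sum_add_distrib, h2, h3]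
  ring

lemma lagrange_sum (m : ℕ) (μ X Y : Fin m → ℝ) :
    (∑ j, ∑ k, μ j * μ k * (X j * Y k - Y j * X k)^2)
      = 2 * ((∑ i, μ i * X i * X i) * (∑ i, μ i * Y i * Y i) - (∑ i, μ i * X i * Y i)^2) := by
  have step : ∀ j : Fin m, (∑ k, μ j * μ k * (X j * Y k - Y j * X k)^2)
      = (μ j * X j * X j) * (∑ k, μ k * Y k * Y k)
        - 2 * ((μ j * X j * Y j) * (∑ k, μ k * X k * Y k))
        + (μ j * Y j * Y j) * (∑ k, μ k * X k * X k) := by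
    intro j
    rw [Finset.mul_sum, Finset.mul_sum, Finset.mul_sum, Finset.mul_sum,
      ← Finset.sum_sub_distrib, ← Finset.sum_add_distrib]
    exact Finset.sum_congr rfl fun k _ => by ring
  simp only [step]
  rw [Finset.sum_add_distrib, Finset.sum_sub_distrib, ← Finset.sum_mul, ← Finset.sum_mul,
    ← Finset.mul_sum, ← Finset.sum_mul]
  ring

/-- The sectional curvature of the left-invariant metric on the solvable extension in the
direction of an orthonormal frame `(X,Y)`:
`K(X,Y) = −Σ_{i≥1} μᵢ²(x₀yᵢ − y₀xᵢ)² − Σ_{1≤j<k} μⱼμₖ(xⱼyₖ − yⱼxₖ)²`. -/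
theorem solv_sectional_curvature (n : ℕ) (μ : Fin (n + 1) → ℝ) (hμ0 : μ 0 = 0)
    (X Y : EuclideanSpace ℝ (Fin (n + 1)))
    (hX : ⟪X, X⟫ = 1) (hY : ⟪Y, Y⟫ = 1) (hXY : ⟪X, Y⟫ = 0) :
    ⟪solvCurv n μ Y X X, Y⟫ =
      -(∑ i ∈ Finset.univ.erase (0 : Fin (n + 1)), μ i ^ 2 * (X 0 * Y i - Y 0 * X i) ^ 2)
        - ∑ j ∈ Finset.univ.erase (0 : Fin (n + 1)),
            ∑ k ∈ Finset.univ.erase (0 : Fin (n + 1)),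
              if j < k then μ j * μ k * (X j * Y k - Y j * X k) ^ 2 else 0 := by
  -- the single sum
  have hsq : (∑ i ∈ Finset.univ.erase (0 : Fin (n + 1)), μ i ^ 2 * (X 0 * Y i - Y 0 * X i) ^ 2)
      = (X 0)^2 * (∑ i, μ i ^ 2 * Y i * Y i) - 2 * X 0 * Y 0 * (∑ i, μ i ^ 2 * X i * Y i)
        + (Y 0)^2 * (∑ i, μ i ^ 2 * X i * X i) := by
    rw [Finset.sum_erase _ (by simp [hμ0])]
    rw [Finset.mul_sum, Finset.mul_sum, Finset.mul_sum,
      ← Finset.sum_sub_distrib, ← Finset.sum_add_distrib]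
    exact Finset.sum_congr rfl fun i _ => by ring
  -- the double sum: first extend to `univ`
  have hext : (∑ j ∈ Finset.univ.erase (0 : Fin (n + 1)),
        ∑ k ∈ Finset.univ.erase (0 : Fin (n + 1)),
          if j < k then μ j * μ k * (X j * Y k - Y j * X k) ^ 2 else 0)
      = ∑ j, ∑ k, if j < k then μ j * μ k * (X j * Y k - Y j * X k) ^ 2 else 0 := by
    have inner_ext : ∀ j : Fin (n+1),
        (∑ k ∈ Finset.univ.erase (0 : Fin (n + 1)),
          if j < k then μ j * μ k * (X j * Y k - Y j * X k) ^ 2 else 0)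
        = ∑ k, if j < k then μ j * μ k * (X j * Y k - Y j * X k) ^ 2 else 0 := by
      intro j
      refine Finset.sum_erase _ ?_
      simp [Fin.not_lt_zero]
    simp only [inner_ext]
    refine Finset.sum_erase _ ?_
    simp [hμ0]
  have hdub : (∑ j, ∑ k, if j < k then μ j * μ k * (X j * Y k - Y j * X k) ^ 2 else 0)
      = (∑ i, μ i * X i * X i) * (∑ i, μ i * Y i * Y i) - (∑ i, μ i * X i * Y i)^2 := by
    have h2 := double_sum_lt (fun j k => μ j * μ k * (X j * Y k - Y j * X k) ^ 2)
      (fun j k => by ring) (fun j => by ring)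
    have h3 := lagrange_sum (n+1) μ X Y
    simp only at h2
    nlinarith [h2, h3]
  rw [solv_key n μ hμ0 X Y, hsq, hext, hdub]
  ring
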